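/- Every well-typed term of the simply typed lambda calculus is strongly normalizing under beta-reduction; in particular every such term has a unique beta-normal form. -/

import Mathlib

/- Simply typed λ-calculus: atomic base types and arrow types. -/
inductive Ty : Type where
  | base : Nat → Ty
  | arr : Ty → Ty → Ty

/- Terms: typed constants, (de Bruijn) variables, application, typed abstraction. -/
inductive Tm : Type where
  | const : Nat → Tm
  | var : Nat → Tm
  | app : Tm → Tm → Tm
  | lam : Ty → Tm → Tm

def liftTm (d : Nat) : Tm → Tm
  | .const c => .const c
  | .var k => if k < d then .var k else .var (k+1)
  | .app m n => .app (liftTm d m) (liftTm d n)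
  | .lam τ m => .lam τ (liftTm (d+1) m)

/- Capture-avoiding substitution for de Bruijn variable d. -/
def substTm (d : Nat) (s : Tm) : Tm → Tm
  | .const c => .const c
  | .var k => if k = d then s else if d < k then .var (k-1) else .var k
  | .app m n => .app (substTm d s m) (substTm d s n)
  | .lam τ m => .lam τ (substTm (d+1) (liftTm 0 s) m)

/- β-reduction: compatible closure of (λx.M) N → M[N/x]. -/
inductive Step : Tm → Tm → Prop where
  | beta : Step (.app (.lam τ m) n) (substTm 0 n m)
  | app1 : Step m m' → Step (.app m n) (.app m' n)
  | app2 : Step n n' → Step (.app m n) (.app m n')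
  | lam : Step m m' → Step (.lam τ m) (.lam τ m')

/- Typing relative to a signature cs for constants and a context Γ. -/
inductive HasType (cs : Nat → Ty) : List Ty → Tm → Ty → Prop where
  | const : HasType cs Γ (.const c) (cs c)
  | var : Γ[k]? = some τ → HasType cs Γ (.var k) τ
  | app : HasType cs Γ m (.arr τ σ) → HasType cs Γ n τ →
      HasType cs Γ (.app m n) σ
  | lam : HasType cs (τ :: Γ) m σ → HasType cs Γ (.lam τ m) (.arr τ σ)

/-! ### Renaming and simultaneous substitution infrastructure -/

def upR (ρ : Nat → Nat) : Nat → Nat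
  | 0 => 0
  | k+1 => ρ k + 1

def renameTm (ρ : Nat → Nat) : Tm → Tm
  | .const c => .const c
  | .var k => .var (ρ k)
  | .app m n => .app (renameTm ρ m) (renameTm ρ n)
  | .lam τ m => .lam τ (renameTm (upR ρ) m)

def upS (γ : Nat → Tm) : Nat → Tm
  | 0 => .var 0
  | k+1 => renameTm Nat.succ (γ k)

def msubst (γ : Nat → Tm) : Tm → Tm
  | .const c => .const c
  | .var k => γ k
  | .app m n => .app (msubst γ m) (msubst γ n)
  | .lam τ m => .lam τ (msubst (upS γ) m)

def consS (u : Tm) (γ : Nat → Tm) : Nat → Tm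
  | 0 => u
  | k+1 => γ k

/-- The single substitution `substTm d s` as a simultaneous substitution. -/
def sigmaS (d : Nat) (s : Tm) : Nat → Tm :=
  fun k => if k = d then s else if d < k then .var (k-1) else .var k

lemma upR_comp (ρ ρ' : Nat → Nat) : (upR ρ) ∘ (upR ρ') = upR (ρ ∘ ρ') := by
  funext k; cases k <;> rfl

lemma rename_rename (t : Tm) : ∀ ρ ρ', renameTm ρ (renameTm ρ' t) = renameTm (ρ ∘ ρ') t := by
  induction t with
  | const c => intro ρ ρ'; rfl
  | var k => intro ρ ρ'; rfl
  | app m n ihm ihn => intro ρ ρ'; simp [renameTm, ihm, ihn]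
  | lam τ m ih => intro ρ ρ'; simp [renameTm, ih, upR_comp]

lemma msubst_rename (t : Tm) : ∀ γ ρ, msubst γ (renameTm ρ t) = msubst (γ ∘ ρ) t := by
  induction t with
  | const c => intro γ ρ; rfl
  | var k => intro γ ρ; rfl
  | app m n ihm ihn => intro γ ρ; simp [renameTm, msubst, ihm, ihn]
  | lam τ m ih =>
    intro γ ρ
    simp only [renameTm, msubst, ih]
    have h : (upS γ ∘ upR ρ) = upS (γ ∘ ρ) := by funext k; cases k <;> rfl
    rw [h]

lemma rename_msubst (t : Tm) : ∀ ρ γ,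
    renameTm ρ (msubst γ t) = msubst (fun k => renameTm ρ (γ k)) t := by
  induction t with
  | const c => intro ρ γ; rfl
  | var k => intro ρ γ; rfl
  | app m n ihm ihn => intro ρ γ; simp [renameTm, msubst, ihm, ihn]
  | lam τ m ih =>
    intro ρ γ
    simp only [renameTm, msubst, ih]
    have h : (fun k => renameTm (upR ρ) (upS γ k)) = upS (fun k => renameTm ρ (γ k)) := by
      funext k; cases k with
      | zero => rfl
      | succ k =>
        show renameTm (upR ρ) (renameTm Nat.succ (γ k)) = renameTm Nat.succ (renameTm ρ (γ k))
        rw [rename_rename, rename_rename]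
        rfl
    rw [h]

lemma msubst_msubst (t : Tm) : ∀ γ δ,
    msubst γ (msubst δ t) = msubst (fun k => msubst γ (δ k)) t := by
  induction t with
  | const c => intro γ δ; rfl
  | var k => intro γ δ; rfl
  | app m n ihm ihn => intro γ δ; simp [msubst, ihm, ihn]
  | lam τ m ih =>
    intro γ δ
    simp only [msubst, ih]
    have h : (fun k => msubst (upS γ) (upS δ k)) = upS (fun k => msubst γ (δ k)) := by
      funext k; cases k with
      | zero => rfl
      | succ k =>
        show msubst (upS γ) (renameTm Nat.succ (δ k)) = renameTm Nat.succ (msubst γ (δ k))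
        rw [msubst_rename, rename_msubst]
        rfl
    rw [h]

lemma msubst_id (t : Tm) : msubst Tm.var t = t := by
  induction t with
  | const c => rfl
  | var k => rfl
  | app m n ihm ihn => simp [msubst, ihm, ihn]
  | lam τ m ih =>
    simp only [msubst]
    congr 1
    have : upS Tm.var = Tm.var := by funext k; cases k <;> rfl
    rw [this, ih]

lemma lift_eq_rename (t : Tm) : ∀ d,
    liftTm d t = renameTm (fun k => if k < d then k else k+1) t := by
  induction t with
  | const c => intro d; rfl
  | var k => intro d; simp only [liftTm, renameTm]; split <;> simp_all
  | app m n ihm ihn => intro d; simp [liftTm, renameTm, ihm, ihn]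
  | lam τ m ih =>
    intro d
    simp only [liftTm, renameTm, ih]
    have h : (upR fun k => if k < d then k else k+1) = fun k => if k < d+1 then k else k+1 := by
      funext k; cases k with
      | zero => simp [upR]
      | succ k => simp only [upR]; split <;> split <;> omega
    rw [h]

lemma lift0_eq (t : Tm) : liftTm 0 t = renameTm Nat.succ t := by
  rw [lift_eq_rename]; congr 1

lemma subst_eq_msubst (t : Tm) : ∀ d s, substTm d s t = msubst (sigmaS d s) t := by
  induction t with
  | const c => intro d s; rfl
  | var k => intro d s; rfl
  | app m n ihm ihn => intro d s; simp [substTm, msubst, ihm, ihn]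
  | lam τ m ih =>
    intro d s
    simp only [substTm, msubst, ih]
    have h : sigmaS (d+1) (liftTm 0 s) = upS (sigmaS d s) := by
      funext k; cases k with
    | zero => simp [sigmaS, upS]
    | succ k =>
      show sigmaS (d+1) (liftTm 0 s) (k+1) = renameTm Nat.succ (sigmaS d s k)
      simp only [sigmaS, lift0_eq]
      rcases Nat.lt_trichotomy k d with h | rfl | h
      · rw [if_neg (by omega), if_neg (by omega), if_neg (by omega), if_neg (by omega)]; rfl
      · rw [if_pos rfl, if_pos rfl]
      · rw [if_neg (by omega), if_pos (by omega), if_neg (by omega), if_pos (by omega)]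
        simp only [renameTm]
        congr 1
        omega
    rw [h]

lemma subst_msubst_up (u : Tm) (γ : Nat → Tm) (m : Tm) :
    substTm 0 u (msubst (upS γ) m) = msubst (consS u γ) m := by
  rw [subst_eq_msubst, msubst_msubst]
  congr 1
  funext k; cases k with
  | zero => rfl
  | succ k =>
    show msubst (sigmaS 0 u) (renameTm Nat.succ (γ k)) = γ k
    rw [msubst_rename]
    have : (sigmaS 0 u) ∘ Nat.succ = Tm.var := by
      funext j; simp [sigmaS, Function.comp]
    rw [this, msubst_id]

lemma msubst_subst0 (γ : Nat → Tm) (n m : Tm) :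
    msubst γ (substTm 0 n m) = substTm 0 (msubst γ n) (msubst (upS γ) m) := by
  rw [subst_msubst_up, subst_eq_msubst, msubst_msubst]
  congr 1
  funext k; cases k with
  | zero => rfl
  | succ k => simp [sigmaS, consS, msubst]

lemma rename_subst0 (ρ : Nat → Nat) (n m : Tm) :
    renameTm ρ (substTm 0 n m) = substTm 0 (renameTm ρ n) (renameTm (upR ρ) m) := by
  rw [subst_eq_msubst, subst_eq_msubst, rename_msubst, msubst_rename]
  congr 1
  funext k; cases k with
  | zero => rfl
  | succ k =>
    simp [sigmaS, renameTm, upR, Function.comp]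

/-! ### Step congruence lemmas -/

lemma Step.renameTmc {m m' : Tm} (h : Step m m') :
    ∀ ρ, Step (renameTm ρ m) (renameTm ρ m') := by
  induction h with
  | @beta τ b n =>
    intro ρ
    rw [rename_subst0]
    exact Step.beta
  | app1 _ ih => intro ρ; exact Step.app1 (ih ρ)
  | app2 _ ih => intro ρ; exact Step.app2 (ih ρ)
  | lam _ ih => intro ρ; exact Step.lam (ih (upR ρ))

lemma Step.msubstc {m m' : Tm} (h : Step m m') :
    ∀ γ, Step (msubst γ m) (msubst γ m') := by
  induction h with
  | @beta τ b n =>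
    intro γ
    rw [msubst_subst0]
    exact Step.beta
  | app1 _ ih => intro γ; exact Step.app1 (ih γ)
  | app2 _ ih => intro γ; exact Step.app2 (ih γ)
  | lam _ ih => intro γ; exact Step.lam (ih (upS γ))

lemma Step.subst0 {m m' : Tm} (h : Step m m') (s : Tm) :
    Step (substTm 0 s m) (substTm 0 s m') := by
  rw [subst_eq_msubst, subst_eq_msubst]
  exact h.msubstc _

open Relation in
lemma steps_app1 {m m' n : Tm} (h : ReflTransGen Step m m') :
    Relation.ReflTransGen Step (.app m n) (.app m' n) :=
  ReflTransGen.lift (fun x => Tm.app x n) (fun _ _ h => Step.app1 h) _ _ h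

open Relation in
lemma steps_app2 {m n n' : Tm} (h : ReflTransGen Step n n') :
    Relation.ReflTransGen Step (.app m n) (.app m n') :=
  ReflTransGen.lift (fun x => Tm.app m x) (fun _ _ h => Step.app2 h) _ _ h

open Relation in
lemma steps_lam {τ : Ty} {m m' : Tm} (h : ReflTransGen Step m m') :
    Relation.ReflTransGen Step (.lam τ m) (.lam τ m') :=
  ReflTransGen.lift (fun x => Tm.lam τ x) (fun _ _ h => Step.lam h) _ _ h

open Relation in
lemma steps_rename {m m' : Tm} (ρ : Nat → Nat) (h : ReflTransGen Step m m') :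
    ReflTransGen Step (renameTm ρ m) (renameTm ρ m') :=
  ReflTransGen.lift (renameTm ρ) (fun _ _ (h : Step _ _) => h.renameTmc ρ) _ _ h

open Relation in
lemma msubst_steps {γ γ' : Nat → Tm} (h : ∀ k, ReflTransGen Step (γ k) (γ' k)) :
    ∀ m, ReflTransGen Step (msubst γ m) (msubst γ' m) := by
  intro m
  induction m generalizing γ γ' with
  | const c => exact ReflTransGen.refl
  | var k => exact h k
  | app a b iha ihb =>
    exact ReflTransGen.trans (steps_app1 (iha h)) (steps_app2 (ihb h))
  | lam τ a ih =>
    apply steps_lam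
    apply ih
    intro k; cases k with
    | zero => exact ReflTransGen.refl
    | succ k => exact steps_rename _ (h k)

open Relation in
lemma steps_subst_arg {s s' : Tm} (h : Step s s') (m : Tm) :
    ReflTransGen Step (substTm 0 s m) (substTm 0 s' m) := by
  rw [subst_eq_msubst, subst_eq_msubst]
  apply msubst_steps
  intro k; cases k with
  | zero => exact ReflTransGen.single h
  | succ k => exact ReflTransGen.refl

lemma step_lam_inv {τ : Ty} {m x : Tm} (h : Step (.lam τ m) x) :
    ∃ m', x = .lam τ m' ∧ Step m m' := by
  cases h with
  | lam h' => exact ⟨_, rfl, h'⟩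

/-! ### Local confluence, Newman, normal forms -/

open Relation in
lemma wcr {a b : Tm} (h1 : Step a b) : ∀ c, Step a c →
    ∃ d, ReflTransGen Step b d ∧ ReflTransGen Step c d := by
  induction h1 with
  | @beta τ m n =>
    intro c h2
    cases h2 with
    | beta => exact ⟨_, ReflTransGen.refl, ReflTransGen.refl⟩
    | app1 h =>
      obtain ⟨m', rfl, hm⟩ := step_lam_inv h
      exact ⟨substTm 0 n m', ReflTransGen.single (hm.subst0 n),
        ReflTransGen.single Step.beta⟩
    | app2 h =>
      exact ⟨substTm 0 _ m, steps_subst_arg h m, ReflTransGen.single Step.beta⟩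
  | @app1 m m' n h ih =>
    intro c h2
    cases h2 with
    | beta =>
      obtain ⟨m0', rfl, hm⟩ := step_lam_inv h
      exact ⟨substTm 0 n m0', ReflTransGen.single Step.beta,
        ReflTransGen.single (hm.subst0 n)⟩
    | app1 h' =>
      obtain ⟨d, hd1, hd2⟩ := ih _ h'
      exact ⟨.app d n, steps_app1 hd1, steps_app1 hd2⟩
    | app2 h' =>
      exact ⟨.app m' _, ReflTransGen.single (Step.app2 h'),
        ReflTransGen.single (Step.app1 h)⟩
  | @app2 n n' m h ih =>
    intro c h2
    cases h2 with
    | beta =>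
      exact ⟨substTm 0 n' _, ReflTransGen.single Step.beta, steps_subst_arg h _⟩
    | app1 h' =>
      exact ⟨.app _ n', ReflTransGen.single (Step.app1 h'),
        ReflTransGen.single (Step.app2 h)⟩
    | app2 h' =>
      obtain ⟨d, hd1, hd2⟩ := ih _ h'
      exact ⟨.app m d, steps_app2 hd1, steps_app2 hd2⟩
  | @lam m m' τ h ih =>
    intro c h2
    obtain ⟨m'', rfl, hm⟩ := step_lam_inv h2
    obtain ⟨d, hd1, hd2⟩ := ih _ hm
    exact ⟨.lam τ d, steps_lam hd1, steps_lam hd2⟩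

open Relation in
lemma confluence {a : Tm} (acc : Acc (fun x y => Step y x) a) :
    ∀ b c, ReflTransGen Step a b → ReflTransGen Step a c →
      ∃ d, ReflTransGen Step b d ∧ ReflTransGen Step c d := by
  induction acc with
  | intro a _ ih =>
    intro b c hab hac
    rcases hab.cases_head with rfl | ⟨b1, hb1, hb⟩
    · exact ⟨c, hac, ReflTransGen.refl⟩
    rcases hac.cases_head with rfl | ⟨c1, hc1, hc⟩
    · exact ⟨b, ReflTransGen.refl, ReflTransGen.head hb1 hb⟩
    obtain ⟨e, hbe, hce⟩ := wcr hb1 _ hc1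
    obtain ⟨f, hbf, hef⟩ := ih b1 hb1 b e hb hbe
    obtain ⟨g, hfg, hcg⟩ := ih c1 hc1 f c (ReflTransGen.trans hce hef) hc
    exact ⟨g, ReflTransGen.trans hbf hfg, hcg⟩

open Relation in
lemma exists_nf {a : Tm} (acc : Acc (fun x y => Step y x) a) :
    ∃ n, ReflTransGen Step a n ∧ ∀ u, ¬ Step n u := by
  induction acc with
  | intro a _ ih =>
    by_cases h : ∃ u, Step a u
    · obtain ⟨u, hu⟩ := h
      obtain ⟨n, h1, h2⟩ := ih u hu
      exact ⟨n, ReflTransGen.head hu h1, h2⟩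
    · exact ⟨a, ReflTransGen.refl, fun u hu => h ⟨u, hu⟩⟩

/-! ### Reducibility (Tait/Girard) -/

abbrev SNt (t : Tm) : Prop := Acc (fun a b => Step b a) t

def Red : Ty → Tm → Prop
  | .base _, t => SNt t
  | .arr a b, t => SNt t ∧ ∀ u, Red a u → Red b (.app t u)

lemma red_sn : ∀ {A t}, Red A t → SNt t := by
  intro A
  cases A with
  | base i => intro t h; exact h
  | arr a b => intro t h; exact h.1

lemma red_step : ∀ {A t t'}, Red A t → Step t t' → Red A t' := by
  intro A
  induction A with
  | base i => intro t t' h st; exact h.inv st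
  | arr a b iha ihb =>
    intro t t' h st
    exact ⟨h.1.inv st, fun u hu => ihb (h.2 u hu) (Step.app1 st)⟩

lemma red_cr3 : ∀ {A} (t : Tm), (∀ τ m, t ≠ .lam τ m) →
    (∀ t', Step t t' → Red A t') → Red A t := by
  intro A
  induction A with
  | base i => intro t _ h; exact Acc.intro t (fun y hy => h y hy)
  | arr a b iha ihb =>
    intro t hneu h
    refine ⟨Acc.intro t (fun y hy => red_sn (h y hy)), ?_⟩
    have key : ∀ u, SNt u → Red a u → Red b (.app t u) := by
      intro u hsnu
      induction hsnu with
      | intro u hacc ihu =>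
        intro hu
        apply ihb (.app t u) (fun _ _ h => Tm.noConfusion h)
        intro v hv
        cases hv with
        | beta => exact absurd rfl (hneu _ _)
        | app1 hst => exact (h _ hst).2 u hu
        | app2 hst => exact ihu _ hst (red_step hu hst)
    exact fun u hu => key u (red_sn hu) hu

lemma red_var (A : Ty) (k : Nat) : Red A (.var k) := by
  apply red_cr3 _ (fun _ _ h => Tm.noConfusion h)
  intro t' h; cases h

lemma sn_lam {τ : Ty} {m : Tm} (h : SNt m) : SNt (Tm.lam τ m) := by
  induction h with
  | intro m _ ih =>
    constructor
    intro y hy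
    obtain ⟨m', rfl, hm⟩ := step_lam_inv hy
    exact ih _ hm

lemma sn_of_map {f : Tm → Tm} (hf : ∀ x y, Step x y → Step (f x) (f y)) :
    ∀ {m}, SNt (f m) → SNt m := by
  have key : ∀ z, SNt z → ∀ m, z = f m → SNt m := by
    intro z hz
    induction hz with
    | intro z _ ih =>
      rintro m rfl
      exact Acc.intro m (fun y hy => ih (f y) (hf _ _ hy) y rfl)
  exact fun {m} h => key (f m) h m rfl

lemma red_app_lam {τ σ : Ty} :
    ∀ B, SNt B → ∀ u, SNt u →
      (∀ u', Red τ u' → Red σ (substTm 0 u' B)) → Red τ u →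
      Red σ (.app (.lam τ B) u) := by
  intro B hB
  induction hB with
  | intro B hB' ihB =>
    intro u hu
    induction hu with
    | intro u hu' ihu =>
      intro H hru
      apply red_cr3 _ (fun _ _ h => Tm.noConfusion h)
      intro v hv
      cases hv with
      | beta => exact H u hru
      | app1 h =>
        obtain ⟨B', rfl, hB2⟩ := step_lam_inv h
        exact ihB _ hB2 u (Acc.intro u hu')
          (fun u' hu'' => red_step (H u' hu'') (hB2.subst0 u')) hru
      | app2 h => exact ihu _ h H (red_step hru h)

lemma env_cons {u : Tm} {τ : Ty} {γ : Nat → Tm} {Γ : List Ty}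
    (hu : Red τ u) (hγ : ∀ k τ', Γ[k]? = some τ' → Red τ' (γ k)) :
    ∀ k τ', (τ :: Γ)[k]? = some τ' → Red τ' (consS u γ k) := by
  intro k τ' hget
  cases k with
  | zero =>
    simp only [List.getElem?_cons_zero, Option.some.injEq] at hget
    cases hget
    exact hu
  | succ k => exact hγ k τ' hget

lemma fundamental {cs : Nat → Ty} {Γ : List Ty} {t : Tm} {A : Ty}
    (h : HasType cs Γ t A) :
    ∀ γ : Nat → Tm, (∀ k τ', Γ[k]? = some τ' → Red τ' (γ k)) →
      Red A (msubst γ t) := by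
  induction h with
  | const =>
    intro γ hγ
    apply red_cr3 _ (fun _ _ h => Tm.noConfusion h)
    intro t' h; cases h
  | var hget => intro γ hγ; exact hγ _ _ hget
  | app hm hn ihm ihn =>
    intro γ hγ
    exact (ihm γ hγ).2 _ (ihn γ hγ)
  | @lam τ Γ' m σ hm ih =>
    intro γ hγ
    have H : ∀ u, Red τ u → Red σ (substTm 0 u (msubst (upS γ) m)) := by
      intro u hu
      rw [subst_msubst_up]
      exact ih (consS u γ) (env_cons hu hγ)
    have hsnB : SNt (msubst (upS γ) m) :=
      sn_of_map (f := fun x => substTm 0 (.var 0) x)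
        (fun x y h => h.subst0 _) (red_sn (H _ (red_var τ 0)))
    refine ⟨sn_lam hsnB, ?_⟩
    intro u hu
    exact red_app_lam _ hsnB u (red_sn hu) H hu

/-- Every well-typed STLC term is strongly normalizing under β-reduction, and
    has a unique β-normal form. -/
theorem stlc_strong_normalization_and_unique_normal_form
    (cs : Nat → Ty) (Γ : List Ty) (t : Tm) (A : Ty)
    (h : HasType cs Γ t A) :
    Acc (fun a b => Step b a) t ∧
    ∃! n, Relation.ReflTransGen Step t n ∧ ∀ u, ¬ Step n u := by
  have hred := fundamental h Tm.var (fun k τ' _ => red_var τ' k)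
  rw [msubst_id] at hred
  have acc : Acc (fun a b => Step b a) t := red_sn hred
  refine ⟨acc, ?_⟩
  obtain ⟨n, hn, hnorm⟩ := exists_nf acc
  refine ⟨n, ⟨hn, hnorm⟩, ?_⟩
  rintro n' ⟨hn', hnorm'⟩
  obtain ⟨d, h1, h2⟩ := confluence acc n' n hn' hn
  have e1 : n' = d := by
    rcases h1.cases_head with rfl | ⟨c, hc, _⟩
    · rfl
    · exact absurd hc (hnorm' _)
  have e2 : n = d := by
    rcases h2.cases_head with rfl | ⟨c, hc, _⟩
    · rfl
    · exact absurd hc (hnorm _)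
  rw [e1, e2]
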